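/- Let U ∈ R^{n1×r} and V ∈ R^{n2×r} have orthonormal columns. Define μ0 := max{ max_{1≤i≤n1} (n1/r)‖U^T e_i‖₂², max_{1≤j≤n2} (n2/r)‖V^T e_j‖₂² } (the smallest standard incoherence parameter) and μ1 := (n1 n2 / r) · max_{i,j} (UV^T)_{ij}² (the smallest joint incoherence parameter). Then μ1 ≥ μ0. -/

import Mathlib

open MeasureTheory Matrix

noncomputable section

/-- Frobenius norm of a real matrix. -/
def frobNorm {m n : ℕ} (X : Matrix (Fin m) (Fin n) ℝ) : ℝ :=
  Real.sqrt (∑ i, ∑ j, (X i j) ^ 2)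

/-- Nuclear norm: sum of singular values (square roots of eigenvalues of XᵀX). -/
def nuclearNorm {m n : ℕ} (X : Matrix (Fin m) (Fin n) ℝ) : ℝ :=
  ∑ i, Real.sqrt ((show (Xᵀ * X).IsHermitian by
    simpa [Matrix.conjTranspose_eq_transpose_of_trivial] using
      Matrix.isHermitian_conjTranspose_mul_self X).eigenvalues i)

/-- Spectral norm: operator norm of the associated Euclidean linear map. -/
def specNorm {m n : ℕ} (X : Matrix (Fin m) (Fin n) ℝ) : ℝ :=
  ‖(Matrix.toEuclideanLin X).toContinuousLinearMap‖

/-- Entrywise ℓ∞ norm. -/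
def linf {m n : ℕ} (X : Matrix (Fin m) (Fin n) ℝ) : ℝ := ⨆ i, ⨆ j, |X i j|

/-- ℓ∞,2 norm: maximum of the largest row and column ℓ₂ norms. -/
def linf2 {n : ℕ} (X : Matrix (Fin n) (Fin n) ℝ) : ℝ :=
  max (⨆ i, Real.sqrt (∑ j, (X i j) ^ 2)) (⨆ j, Real.sqrt (∑ i, (X i j) ^ 2))

/-- Operator norm (w.r.t. the Frobenius norm) of a map on n×n matrices. -/
def opNormMap {n : ℕ} (A : Matrix (Fin n) (Fin n) ℝ → Matrix (Fin n) (Fin n) ℝ) : ℝ :=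
  ⨆ Z : {Z : Matrix (Fin n) (Fin n) ℝ // frobNorm Z ≤ 1}, frobNorm (A Z.1)

/-- P_Ω for a Boolean sample ω. -/
def projB {n : ℕ} (ω : Fin n × Fin n → Bool) (Z : Matrix (Fin n) (Fin n) ℝ) :
    Matrix (Fin n) (Fin n) ℝ := fun i j => if ω (i, j) then Z i j else 0

open Classical in
/-- P_Ω for a set Ω of indices. -/
def projS {n : ℕ} (Ω : Set (Fin n × Fin n)) (Z : Matrix (Fin n) (Fin n) ℝ) :
    Matrix (Fin n) (Fin n) ℝ := fun i j => if (i, j) ∈ Ω then Z i j else 0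

/-- The tangent-space projection P_T determined by U and V. -/
def projT {n r : ℕ} (U V : Matrix (Fin n) (Fin r) ℝ) (Z : Matrix (Fin n) (Fin n) ℝ) :
    Matrix (Fin n) (Fin n) ℝ :=
  U * Uᵀ * Z + Z * V * Vᵀ - U * Uᵀ * Z * V * Vᵀ

/-- Bernoulli(p) measure on Bool. -/
def bern (p : ℝ) : Measure Bool :=
  ENNReal.ofReal p • Measure.dirac true + ENNReal.ofReal (1 - p) • Measure.dirac false

/-- Product Bernoulli(p) measure on index samples: each (i,j) observed independently
with probability p. -/
def sampleMeasure (n : ℕ) (p : ℝ) : Measure (Fin n × Fin n → Bool) :=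
  Measure.pi fun _ => bern p

/-- ℓ₂ norm of the i-th row of U, i.e. ‖Uᵀ e_i‖₂. -/
def rowNorm {n r : ℕ} (U : Matrix (Fin n) (Fin r) ℝ) (i : Fin n) : ℝ :=
  Real.sqrt (∑ k, (U i k) ^ 2)

/-- the smallest joint incoherence parameter μ1 always dominates
the smallest standard incoherence parameter μ0. -/
theorem statement15 (n1 n2 r : ℕ) (U : Matrix (Fin n1) (Fin r) ℝ)
    (V : Matrix (Fin n2) (Fin r) ℝ)
    (hU : Uᵀ * U = 1) (hV : Vᵀ * V = 1) :
    max (⨆ i, (n1 : ℝ) / r * (rowNorm U i) ^ 2) (⨆ j, (n2 : ℝ) / r * (rowNorm V j) ^ 2) ≤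
      (n1 : ℝ) * n2 / r * ⨆ i, ⨆ j, ((U * Vᵀ) i j) ^ 2 := by
  set M : ℝ := ⨆ i, ⨆ j, ((U * Vᵀ) i j) ^ 2 with hM
  have hMnn : 0 ≤ M := Real.iSup_nonneg fun i => Real.iSup_nonneg fun j => sq_nonneg _
  have hle : ∀ i j, ((U * Vᵀ) i j) ^ 2 ≤ M := by
    intro i j
    calc ((U * Vᵀ) i j) ^ 2 ≤ ⨆ j, ((U * Vᵀ) i j) ^ 2 :=
          le_ciSup (f := fun j => ((U * Vᵀ) i j) ^ 2)
            (Set.Finite.bddAbove (Set.finite_range _)) j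
      _ ≤ M := by
          rw [hM]
          exact le_ciSup (f := fun i => ⨆ j, ((U * Vᵀ) i j) ^ 2)
            (Set.Finite.bddAbove (Set.finite_range _)) i
  have hRHSnn : 0 ≤ (n1 : ℝ) * n2 / r * M :=
    mul_nonneg (div_nonneg (mul_nonneg (Nat.cast_nonneg _) (Nat.cast_nonneg _)) (Nat.cast_nonneg _)) hMnn
  apply max_le
  · apply Real.iSup_le _ hRHSnn
    intro i
    have hrow : (rowNorm U i) ^ 2 = ∑ j, ((U * Vᵀ) i j) ^ 2 := by
      have h1 : (U * Vᵀ) * (U * Vᵀ)ᵀ = U * Uᵀ := by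
        rw [Matrix.transpose_mul, Matrix.transpose_transpose]
        rw [Matrix.mul_assoc, ← Matrix.mul_assoc Vᵀ, hV, Matrix.one_mul]
      have h2 := congrFun (congrFun h1 i) i
      simp only [Matrix.mul_apply, Matrix.transpose_apply] at h2
      rw [rowNorm, Real.sq_sqrt (Finset.sum_nonneg fun _ _ => sq_nonneg _)]
      simp only [pow_two, Matrix.mul_apply, Matrix.transpose_apply]
      exact h2.symm
    have hsum : ∑ j, ((U * Vᵀ) i j) ^ 2 ≤ n2 * M := by
      calc ∑ j, ((U * Vᵀ) i j) ^ 2 ≤ ∑ _j : Fin n2, M := Finset.sum_le_sum fun j _ => hle i j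
        _ = n2 * M := by simp [mul_comm]
    calc (n1 : ℝ) / r * (rowNorm U i) ^ 2 ≤ (n1 : ℝ) / r * (n2 * M) := by
          apply mul_le_mul_of_nonneg_left _ (div_nonneg (Nat.cast_nonneg _) (Nat.cast_nonneg _))
          rw [hrow]; exact hsum
      _ = (n1 : ℝ) * n2 / r * M := by ring
  · apply Real.iSup_le _ hRHSnn
    intro j
    have hrow : (rowNorm V j) ^ 2 = ∑ i, ((U * Vᵀ) i j) ^ 2 := by
      have h1 : (U * Vᵀ)ᵀ * (U * Vᵀ) = V * Vᵀ := by
        rw [Matrix.transpose_mul, Matrix.transpose_transpose]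
        rw [Matrix.mul_assoc, ← Matrix.mul_assoc Uᵀ, hU, Matrix.one_mul]
      have h2 := congrFun (congrFun h1 j) j
      simp only [Matrix.mul_apply, Matrix.transpose_apply] at h2
      rw [rowNorm, Real.sq_sqrt (Finset.sum_nonneg fun _ _ => sq_nonneg _)]
      simp only [pow_two, Matrix.mul_apply, Matrix.transpose_apply]
      exact h2.symm
    have hsum : ∑ i, ((U * Vᵀ) i j) ^ 2 ≤ n1 * M := by
      calc ∑ i, ((U * Vᵀ) i j) ^ 2 ≤ ∑ _i : Fin n1, M := Finset.sum_le_sum fun i _ => hle i j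
        _ = n1 * M := by simp [mul_comm]
    calc (n2 : ℝ) / r * (rowNorm V j) ^ 2 ≤ (n2 : ℝ) / r * (n1 * M) := by
          apply mul_le_mul_of_nonneg_left _ (div_nonneg (Nat.cast_nonneg _) (Nat.cast_nonneg _))
          rw [hrow]; exact hsum
      _ = (n1 : ℝ) * n2 / r * M := by ring

end
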